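/- Let λ be a Young diagram and let i, j ∈ B⁺(λ) with |i − j| > 1 (so that λ ⊞ i ⊞ j is defined and equals λ ⊞ j ⊞ i). Then (1 − 1/(i−j)²) · ((|λ|+1)/(|λ|+2)) · (d_λ · d_{λ ⊞ i ⊞ j}) / (d_{λ ⊞ i} · d_{λ ⊞ j}) = 1. -/

import Mathlib

/-- The content of a cell `(r, c)` (row `r`, column `c`) is `c - r`. -/
def content (x : ℕ × ℕ) : ℤ := (x.2 : ℤ) - (x.1 : ℤ)

/-- `x` is an addable box of the Young diagram `μ`: `x ∉ μ` and `μ ∪ {x}` is again a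
Young diagram. -/
def Addable (μ : YoungDiagram) (x : ℕ × ℕ) : Prop :=
  x ∉ μ ∧ IsLowerSet (↑(insert x μ.cells) : Set (ℕ × ℕ))

/-- `x` is a removable box of the Young diagram `μ`: `x ∈ μ` and `μ ∖ {x}` is again a
Young diagram. -/
def Removable (μ : YoungDiagram) (x : ℕ × ℕ) : Prop :=
  x ∈ μ ∧ IsLowerSet (↑(μ.cells.erase x) : Set (ℕ × ℕ))

/-- `B⁺(μ)`: the set of contents of addable boxes of `μ`. -/
def Bplus (μ : YoungDiagram) : Set ℤ := {i | ∃ x, Addable μ x ∧ content x = i}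

/-- `B⁻(μ)`: the set of contents of removable boxes of `μ`. -/
def Bminus (μ : YoungDiagram) : Set ℤ := {i | ∃ x, Removable μ x ∧ content x = i}

/-- `AddBox l i m` means `m = l ⊞ i`, i.e. `m` is obtained from `l` by adding an addable
box of content `i`. -/
def AddBox (l : YoungDiagram) (i : ℤ) (m : YoungDiagram) : Prop :=
  ∃ x, Addable l x ∧ content x = i ∧ m.cells = insert x l.cells

/-- `RemoveBox l i m` means `m = l ⊟ i`, i.e. `m` is obtained from `l` by removing a
removable box of content `i`. -/
def RemoveBox (l : YoungDiagram) (i : ℤ) (m : YoungDiagram) : Prop :=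
  ∃ x, Removable l x ∧ content x = i ∧ m.cells = l.cells.erase x

/-- The hook length `h_μ(r, c)` of a cell of `μ`. -/
def hookLen (μ : YoungDiagram) (x : ℕ × ℕ) : ℕ :=
  (μ.cells.filter (fun y => (y.1 = x.1 ∧ x.2 ≤ y.2) ∨ (y.2 = x.2 ∧ x.1 ≤ y.1))).card

/-- `d_μ = |μ|! / ∏ hook lengths`, the dimension of the irreducible `ℚS_{|μ|}`-module
indexed by `μ` (hook length formula). -/
def dimPart (μ : YoungDiagram) : ℚ :=
  (Nat.factorial μ.card : ℚ) / ∏ x ∈ μ.cells, (hookLen μ x : ℚ)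


lemma mem_of_addable_lt (μ : YoungDiagram) (a : ℕ × ℕ) (ha : Addable μ a) {z : ℕ × ℕ}
    (hz : z ≤ a) (hne : z ≠ a) : z ∈ μ := by
  have h : z ∈ (↑(insert a μ.cells) : Set (ℕ × ℕ)) := ha.2 hz (by simp)
  simp only [Finset.coe_insert, Set.mem_insert_iff, Finset.mem_coe] at h
  rcases h with h | h
  · exact absurd h hne
  · exact (YoungDiagram.mem_cells _).mp h

lemma notMem_of_addable_le (μ : YoungDiagram) (a : ℕ × ℕ) (ha : Addable μ a) {z : ℕ × ℕ}
    (hz : a ≤ z) : z ∉ μ := fun h => ha.1 (μ.isLowerSet hz ((YoungDiagram.mem_cells _).mpr h))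

lemma addable_not_le (μ : YoungDiagram) (a b : ℕ × ℕ) (ha : Addable μ a) (hb : Addable μ b)
    (hne : a ≠ b) : ¬ a ≤ b := fun hle => ha.1 (mem_of_addable_lt μ b hb hle hne)

lemma addable_unique (μ : YoungDiagram) (a b : ℕ × ℕ) (ha : Addable μ a) (hb : Addable μ b)
    (hc : content a = content b) : a = b := by
  by_contra hne
  unfold content at hc
  have h1 := addable_not_le μ a b ha hb hne
  have h2 := addable_not_le μ b a hb ha (Ne.symm hne)
  rw [Prod.le_def, not_and_or, not_le, not_le] at h1 h2
  rcases h1 with h1 | h1 <;> rcases h2 with h2 | h2 <;> omega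

/-- if `b` is addable to `μ ∪ {a}` and its content differs from `a`'s by more than 1,
then it is addable to `μ`. -/
lemma addable_of_addable_insert (μ ν : YoungDiagram) (a b : ℕ × ℕ)
    (ha : Addable μ a) (hν : ν.cells = insert a μ.cells)
    (hb : Addable ν b) (hgap : 1 < |content a - content b|) : Addable μ b := by
  have haν : a ∈ ν := (YoungDiagram.mem_cells _).mp (by rw [hν]; exact Finset.mem_insert_self _ _)
  have hbν : b ∉ ν := hb.1
  have hab : a ≠ b := fun h => hbν (h ▸ haν)
  -- key: ¬ a ≤ b
  have hnab : ¬ a ≤ b := by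
    intro hle
    rcases Prod.le_def.mp hle with ⟨h1, h2⟩
    unfold content at hgap
    have hgap' := lt_abs.mp hgap
    clear hgap
    rcases Nat.lt_or_ge a.1 b.1 with hr | hr
    · rcases Nat.lt_or_ge a.2 b.2 with hc | hc
      · -- u = (b.1 - 1, b.2 - 1)
        have hu : (b.1 - 1, b.2 - 1) ∈ ν := mem_of_addable_lt ν b hb
          (Prod.mk_le_mk.mpr ⟨Nat.sub_le _ _, Nat.sub_le _ _⟩)
          (by simp [Prod.ext_iff]; omega)
        have huμ : (b.1 - 1, b.2 - 1) ∈ μ := by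
          have := (YoungDiagram.mem_cells _).mpr hu
          rw [hν, Finset.mem_insert] at this
          rcases this with h | h
          · exfalso; have e1 := congrArg Prod.fst h; have e2 := congrArg Prod.snd h
            simp at e1 e2; omega
          · exact (YoungDiagram.mem_cells _).mp h
        exact notMem_of_addable_le μ a ha
          (Prod.mk_le_mk.mpr ⟨by omega, by omega⟩) huμ
      · -- a.2 = b.2, a.1 < b.1 : u = (b.1 - 1, b.2)
        have hceq : a.2 = b.2 := le_antisymm h2 hc
        have hu : (b.1 - 1, b.2) ∈ ν := mem_of_addable_lt ν b hb
          (Prod.mk_le_mk.mpr ⟨Nat.sub_le _ _, le_refl _⟩)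
          (by simp [Prod.ext_iff]; omega)
        have := (YoungDiagram.mem_cells _).mpr hu
        rw [hν, Finset.mem_insert] at this
        rcases this with h | h
        · have e1 := congrArg Prod.fst h; have e2 := congrArg Prod.snd h
          simp at e1 e2; omega
        · exact notMem_of_addable_le μ a ha
            (Prod.mk_le_mk.mpr ⟨by omega, by omega⟩) ((YoungDiagram.mem_cells _).mp h)
    · -- a.1 = b.1, so a.2 < b.2 : u = (b.1, b.2 - 1)
      have hreq : a.1 = b.1 := le_antisymm h1 hr
      have hclt : a.2 < b.2 := by
        rcases Nat.lt_or_ge a.2 b.2 with h | h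
        · exact h
        · exact absurd (Prod.ext hreq (le_antisymm h2 h)) hab
      have hu : (b.1, b.2 - 1) ∈ ν := mem_of_addable_lt ν b hb
        (Prod.mk_le_mk.mpr ⟨le_refl _, Nat.sub_le _ _⟩)
        (by simp [Prod.ext_iff]; omega)
      have := (YoungDiagram.mem_cells _).mpr hu
      rw [hν, Finset.mem_insert] at this
      rcases this with h | h
      · have e1 := congrArg Prod.fst h; have e2 := congrArg Prod.snd h
        simp at e1 e2; omega
      · exact notMem_of_addable_le μ a ha
          (Prod.mk_le_mk.mpr ⟨by omega, by omega⟩) ((YoungDiagram.mem_cells _).mp h)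
  constructor
  · intro hbμ
    exact hbν ((YoungDiagram.mem_cells _).mp (by
      rw [hν]
      exact Finset.mem_insert_of_mem ((YoungDiagram.mem_cells _).mpr hbμ)))
  · intro w z hzw hw
    simp only [Finset.coe_insert, Set.mem_insert_iff, Finset.mem_coe] at hw ⊢
    rcases hw with hw | hw
    · have hz : z ∈ (↑(insert b ν.cells) : Set (ℕ × ℕ)) := hb.2 (hw ▸ hzw) (by simp)
      simp only [Finset.coe_insert, Set.mem_insert_iff, Finset.mem_coe] at hz
      rcases hz with hz | hz
      · exact Or.inl hz
      · rw [hν, Finset.mem_insert] at hz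
        rcases hz with hz | hz
        · exact absurd (hz ▸ hw ▸ hzw) hnab
        · exact Or.inr hz
    · exact Or.inr (μ.isLowerSet hzw hw)

lemma hookLen_insert (μ ν : YoungDiagram) (a : ℕ × ℕ) (ha : a ∉ μ)
    (hν : ν.cells = insert a μ.cells) (x : ℕ × ℕ) :
    hookLen ν x = hookLen μ x +
      (if (a.1 = x.1 ∧ x.2 ≤ a.2) ∨ (a.2 = x.2 ∧ x.1 ≤ a.1) then 1 else 0) := by
  unfold hookLen
  rw [hν, Finset.filter_insert]
  split_ifs with h
  · rw [Finset.card_insert_of_notMem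
      (fun hmem => ha ((YoungDiagram.mem_cells a).mp (Finset.mem_filter.mp hmem).1))]
  · ring

lemma hookLen_pos (μ : YoungDiagram) (x : ℕ × ℕ) (hx : x ∈ μ) : 0 < hookLen μ x := by
  apply Finset.card_pos.mpr
  exact ⟨x, Finset.mem_filter.mpr ⟨(YoungDiagram.mem_cells _).mpr hx, Or.inl ⟨rfl, le_refl _⟩⟩⟩

lemma hookLen_self_eq_zero (μ : YoungDiagram) (a : ℕ × ℕ) (ha : Addable μ a) :
    hookLen μ a = 0 := by
  apply Finset.card_eq_zero.mpr
  rw [Finset.filter_eq_empty_iff]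
  intro y hy
  intro hcond
  apply absurd ((YoungDiagram.mem_cells _).mp hy)
  rcases hcond with ⟨h1, h2⟩ | ⟨h1, h2⟩
  · exact notMem_of_addable_le μ a ha (Prod.mk_le_mk.mpr ⟨le_of_eq h1.symm, h2⟩)
  · exact notMem_of_addable_le μ a ha (Prod.mk_le_mk.mpr ⟨h2, le_of_eq h1.symm⟩)

lemma hookLen_new_box (μ ν : YoungDiagram) (a : ℕ × ℕ) (ha : Addable μ a)
    (hν : ν.cells = insert a μ.cells) : hookLen ν a = 1 := by
  rw [hookLen_insert μ ν a ha.1 hν a, hookLen_self_eq_zero μ a ha, if_pos (Or.inl ⟨rfl, le_refl _⟩)]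

/-- the hook length at the intersection cell `(a.1, b.2)`. -/
lemma hookLen_corner (l : YoungDiagram) (a b : ℕ × ℕ) (ha : Addable l a) (hb : Addable l b)
    (hr : a.1 < b.1) (hc : b.2 < a.2) :
    hookLen l (a.1, b.2) = (a.2 - b.2) + (b.1 - a.1) - 1 := by
  unfold hookLen
  have hfil : l.cells.filter
      (fun y => (y.1 = (a.1, b.2).1 ∧ (a.1, b.2).2 ≤ y.2) ∨ (y.2 = (a.1, b.2).2 ∧ (a.1, b.2).1 ≤ y.1)) =
      ((Finset.Ico b.2 a.2).image (fun c => (a.1, c))) ∪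
      ((Finset.Ico (a.1+1) b.1).image (fun r => (r, b.2))) := by
    ext y
    simp only [Finset.mem_filter, Finset.mem_union, Finset.mem_image, Finset.mem_Ico]
    constructor
    · rintro ⟨hyl, ⟨h1, h2⟩ | ⟨h1, h2⟩⟩
      · -- row of a, col ≥ b.2 ; need col < a.2
        have hlt : y.2 < a.2 := by
          by_contra hge
          exact notMem_of_addable_le l a ha
            (Prod.mk_le_mk.mpr ⟨le_of_eq h1.symm, by omega⟩) ((YoungDiagram.mem_cells _).mp hyl)
        exact Or.inl ⟨y.2, ⟨h2, hlt⟩, by rw [← h1]⟩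
      · -- col of b, row ≥ a.1
        rcases Nat.eq_or_lt_of_le h2 with he | hlt
        · exact Or.inl ⟨y.2, ⟨le_of_eq h1.symm, by omega⟩, by rw [he]⟩
        · have hltb : y.1 < b.1 := by
            by_contra hge
            exact notMem_of_addable_le l b hb
              (Prod.mk_le_mk.mpr ⟨by omega, le_of_eq h1.symm⟩) ((YoungDiagram.mem_cells _).mp hyl)
          exact Or.inr ⟨y.1, ⟨by omega, hltb⟩, by rw [← h1]⟩
    · rintro (⟨c, ⟨hc1, hc2⟩, rfl⟩ | ⟨r, ⟨hr1, hr2⟩, rfl⟩)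
      · refine ⟨(YoungDiagram.mem_cells _).mpr (mem_of_addable_lt l a ha
          (Prod.mk_le_mk.mpr ⟨le_refl _, le_of_lt hc2⟩) (by simp [Prod.ext_iff]; omega)), ?_⟩
        exact Or.inl ⟨rfl, hc1⟩
      · refine ⟨(YoungDiagram.mem_cells _).mpr (mem_of_addable_lt l b hb
          (Prod.mk_le_mk.mpr ⟨le_of_lt hr2, le_refl _⟩) (by simp [Prod.ext_iff]; omega)), ?_⟩
        exact Or.inr ⟨rfl, by omega⟩
  rw [hfil, Finset.card_union_of_disjoint, Finset.card_image_of_injective,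
    Finset.card_image_of_injective]
  · simp [Nat.card_Ico]; omega
  · intro x y hxy; simpa [Prod.ext_iff] using hxy
  · intro x y hxy; simpa [Prod.ext_iff] using hxy
  · rw [Finset.disjoint_left]
    intro z hz1 hz2
    simp only [Finset.mem_image, Finset.mem_Ico] at hz1 hz2
    obtain ⟨c, hcm, rfl⟩ := hz1
    obtain ⟨r, hrm, he⟩ := hz2
    have := congrArg Prod.fst he
    simp at this; omega

set_option maxHeartbeats 2000000 in
lemma main_calc (l mi mj m : YoungDiagram) (a b : ℕ × ℕ)
    (ha : Addable l a) (hb : Addable l b)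
    (hr : a.1 < b.1) (hc : b.2 < a.2)
    (hmic : mi.cells = insert a l.cells)
    (hmjc : mj.cells = insert b l.cells)
    (hmc : m.cells = insert b (insert a l.cells)) :
    (1 - 1 / ((content a : ℚ) - (content b : ℚ)) ^ 2) *
      (((l.card : ℚ) + 1) / ((l.card : ℚ) + 2)) *
      (dimPart l * dimPart m) / (dimPart mi * dimPart mj) = 1 := by
  have haMem : a ∉ l.cells := fun h => ha.1 ((YoungDiagram.mem_cells _).mp h)
  have hbMem : b ∉ l.cells := fun h => hb.1 ((YoungDiagram.mem_cells _).mp h)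
  have hab : a ≠ b := fun h => absurd (congrArg Prod.fst h) (by omega)
  have hbmi : Addable mi b := by
    constructor
    · intro h
      have := (YoungDiagram.mem_cells _).mpr h
      rw [hmic, Finset.mem_insert] at this
      rcases this with h' | h'
      · exact hab h'.symm
      · exact hbMem h'
    · have : insert b mi.cells = m.cells := by rw [hmic, hmc]
      rw [this]; exact m.isLowerSet
  -- increment formulas
  have Hmi : ∀ x, hookLen mi x = hookLen l x +
      (if (a.1 = x.1 ∧ x.2 ≤ a.2) ∨ (a.2 = x.2 ∧ x.1 ≤ a.1) then 1 else 0) :=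
    hookLen_insert l mi a ha.1 hmic
  have Hmj : ∀ x, hookLen mj x = hookLen l x +
      (if (b.1 = x.1 ∧ x.2 ≤ b.2) ∨ (b.2 = x.2 ∧ x.1 ≤ b.1) then 1 else 0) :=
    hookLen_insert l mj b hb.1 hmjc
  have Hm : ∀ x, hookLen m x = hookLen mi x +
      (if (b.1 = x.1 ∧ x.2 ≤ b.2) ∨ (b.2 = x.2 ∧ x.1 ≤ b.1) then 1 else 0) :=
    hookLen_insert mi m b hbmi.1 (by rw [hmc, hmic])
  -- new boxes have hook length one
  have hmia : hookLen mi a = 1 := hookLen_new_box l mi a ha hmic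
  have hmjb : hookLen mj b = 1 := hookLen_new_box l mj b hb hmjc
  have hmb : hookLen m b = 1 := hookLen_new_box mi m b hbmi (by rw [hmc, hmic])
  have hma : hookLen m a = 1 := by
    rw [Hm a, hmia, if_neg]; rintro (⟨h1, _⟩ | ⟨h1, _⟩) <;> omega
  -- the corner cell
  set y0 : ℕ × ℕ := (a.1, b.2) with hy0def
  set d : ℕ := (a.2 - b.2) + (b.1 - a.1) - 1 with hd
  have hdpos : 1 ≤ d := by omega
  have hy0mem : y0 ∈ l.cells := (YoungDiagram.mem_cells _).mpr
    (mem_of_addable_lt l a ha (Prod.mk_le_mk.mpr ⟨le_refl _, le_of_lt hc⟩)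
      (by simp [hy0def, Prod.ext_iff]; omega))
  have hly0 : hookLen l y0 = d := hookLen_corner l a b ha hb hr hc
  have hmiy0 : hookLen mi y0 = d + 1 := by
    rw [Hmi y0, hly0, if_pos (Or.inl ⟨rfl, le_of_lt hc⟩)]
  have hmjy0 : hookLen mj y0 = d + 1 := by
    rw [Hmj y0, hly0, if_pos (Or.inr ⟨rfl, le_of_lt hr⟩)]
  have hmy0 : hookLen m y0 = d + 2 := by
    rw [Hm y0, hmiy0, if_pos (Or.inr ⟨rfl, le_of_lt hr⟩)]
  -- termwise equality away from the corner
  have hterm : ∀ y ∈ l.cells.erase y0,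
      (hookLen l y : ℚ) * (hookLen m y : ℚ) = (hookLen mi y : ℚ) * (hookLen mj y : ℚ) := by
    intro y hy
    have hyne : y ≠ y0 := (Finset.mem_erase.mp hy).1
    have hyl : y ∈ l.cells := (Finset.mem_erase.mp hy).2
    have hnot : ¬ (((a.1 = y.1 ∧ y.2 ≤ a.2) ∨ (a.2 = y.2 ∧ y.1 ≤ a.1)) ∧
        ((b.1 = y.1 ∧ y.2 ≤ b.2) ∨ (b.2 = y.2 ∧ y.1 ≤ b.1))) := by
      rintro ⟨hA | hA, hB | hB⟩
      · omega
      · exact hyne (by simp [hy0def, Prod.ext_iff]; omega)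
      · omega
      · omega
    have hN : hookLen l y * hookLen m y = hookLen mi y * hookLen mj y := by
      rw [Hm y, Hmi y, Hmj y]
      split_ifs with h1 h2 h2
      · exact absurd ⟨h1, h2⟩ hnot
      · ring
      · ring
      · ring
    exact_mod_cast hN
  -- the key product identity over the cells of l
  have hkey : (∏ y ∈ l.cells, ((hookLen mi y : ℚ) * (hookLen mj y : ℚ))) * ((d : ℚ) * ((d : ℚ) + 2)) =
      (∏ y ∈ l.cells, ((hookLen l y : ℚ) * (hookLen m y : ℚ))) * (((d : ℚ) + 1) * ((d : ℚ) + 1)) := by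
    rw [← Finset.mul_prod_erase _ _ hy0mem, ← Finset.mul_prod_erase _ _ hy0mem,
      Finset.prod_congr rfl hterm, hly0, hmy0, hmiy0, hmjy0]
    push_cast; ring
  -- full hook products
  have hbMem' : b ∉ insert a l.cells := by
    rw [Finset.mem_insert]; rintro (h | h)
    · exact hab h.symm
    · exact hbMem h
  have hPmi : (∏ x ∈ mi.cells, (hookLen mi x : ℚ)) = ∏ x ∈ l.cells, (hookLen mi x : ℚ) := by
    rw [hmic, Finset.prod_insert haMem, hmia]; norm_num
  have hPmj : (∏ x ∈ mj.cells, (hookLen mj x : ℚ)) = ∏ x ∈ l.cells, (hookLen mj x : ℚ) := by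
    rw [hmjc, Finset.prod_insert hbMem, hmjb]; norm_num
  have hPm : (∏ x ∈ m.cells, (hookLen m x : ℚ)) = ∏ x ∈ l.cells, (hookLen m x : ℚ) := by
    rw [hmc, Finset.prod_insert hbMem', Finset.prod_insert haMem, hmb, hma]; norm_num
  -- cardinalities
  have hcardmi : mi.card = l.card + 1 := by
    show mi.cells.card = l.cells.card + 1
    rw [hmic, Finset.card_insert_of_notMem haMem]
  have hcardmj : mj.card = l.card + 1 := by
    show mj.cells.card = l.cells.card + 1
    rw [hmjc, Finset.card_insert_of_notMem hbMem]
  have hcardm : m.card = l.card + 2 := by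
    show m.cells.card = l.cells.card + 2
    rw [hmc, Finset.card_insert_of_notMem hbMem', Finset.card_insert_of_notMem haMem]
  -- nonvanishing of the four products over l.cells
  have hsub_mi : ∀ x ∈ l.cells, x ∈ mi := fun x hx => (YoungDiagram.mem_cells _).mp
    (by rw [hmic]; exact Finset.mem_insert_of_mem hx)
  have hsub_mj : ∀ x ∈ l.cells, x ∈ mj := fun x hx => (YoungDiagram.mem_cells _).mp
    (by rw [hmjc]; exact Finset.mem_insert_of_mem hx)
  have hsub_m : ∀ x ∈ l.cells, x ∈ m := fun x hx => (YoungDiagram.mem_cells _).mp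
    (by rw [hmc]; exact Finset.mem_insert_of_mem (Finset.mem_insert_of_mem hx))
  have hA : (∏ x ∈ l.cells, (hookLen l x : ℚ)) ≠ 0 :=
    Finset.prod_ne_zero_iff.mpr fun x hx =>
      Nat.cast_ne_zero.mpr (hookLen_pos l x ((YoungDiagram.mem_cells _).mp hx)).ne'
  have hB : (∏ x ∈ l.cells, (hookLen mi x : ℚ)) ≠ 0 :=
    Finset.prod_ne_zero_iff.mpr fun x hx =>
      Nat.cast_ne_zero.mpr (hookLen_pos mi x (hsub_mi x hx)).ne'
  have hC : (∏ x ∈ l.cells, (hookLen mj x : ℚ)) ≠ 0 :=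
    Finset.prod_ne_zero_iff.mpr fun x hx =>
      Nat.cast_ne_zero.mpr (hookLen_pos mj x (hsub_mj x hx)).ne'
  have hE : (∏ x ∈ l.cells, (hookLen m x : ℚ)) ≠ 0 :=
    Finset.prod_ne_zero_iff.mpr fun x hx =>
      Nat.cast_ne_zero.mpr (hookLen_pos m x (hsub_m x hx)).ne'
  -- the content difference
  have hq : (content a : ℚ) - (content b : ℚ) = (d : ℚ) + 1 := by
    have hz : content a - content b = (d : ℤ) + 1 := by unfold content; omega
    exact_mod_cast hz
  -- split the key product
  rw [Finset.prod_mul_distrib, Finset.prod_mul_distrib] at hkey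
  -- factorials
  have hf1 : (((l.card + 1).factorial : ℚ)) = ((l.card : ℚ) + 1) * (l.card.factorial : ℚ) := by
    rw [Nat.factorial_succ]; push_cast; ring
  have hf2 : (((l.card + 2).factorial : ℚ)) =
      ((l.card : ℚ) + 2) * (((l.card : ℚ) + 1) * (l.card.factorial : ℚ)) := by
    rw [show l.card + 2 = (l.card + 1) + 1 from rfl, Nat.factorial_succ, Nat.factorial_succ]
    push_cast; ring
  have hfac0 : ((l.card.factorial : ℚ)) ≠ 0 := Nat.cast_ne_zero.mpr l.card.factorial_ne_zero
  have hn1 : ((l.card : ℚ) + 1) ≠ 0 := ne_of_gt (by linarith [(Nat.cast_nonneg l.card : (0:ℚ) ≤ l.card)])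
  have hn2 : ((l.card : ℚ) + 2) ≠ 0 := ne_of_gt (by linarith [(Nat.cast_nonneg l.card : (0:ℚ) ≤ l.card)])
  have hd1 : ((d : ℚ) + 1) ≠ 0 := by positivity
  have hdne : (d : ℚ) ≠ 0 := Nat.cast_ne_zero.mpr (by omega)
  have hd2 : ((d : ℚ) + 2) ≠ 0 := by positivity
  unfold dimPart
  rw [hq, hcardmi, hcardmj, hcardm, hPmi, hPmj, hPm, hf1, hf2]
  field_simp
  linear_combination hkey

/-- For `i, j ∈ B⁺(λ)` with `|i − j| > 1`:
`(1 − 1/(i−j)²)·((|λ|+1)/(|λ|+2))·(d_λ·d_{λ⊞i⊞j})/(d_{λ⊞i}·d_{λ⊞j}) = 1`. -/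
theorem hook_identity_two_adds (l : YoungDiagram) (i j : ℤ)
    (hi : i ∈ Bplus l) (hj : j ∈ Bplus l) (hij : 1 < |i - j|)
    (mi mj m : YoungDiagram) (hmi : AddBox l i mi) (hmj : AddBox l j mj)
    (hm : AddBox mi j m) :
    (1 - 1 / ((i : ℚ) - (j : ℚ)) ^ 2) * (((l.card : ℚ) + 1) / ((l.card : ℚ) + 2)) *
      (dimPart l * dimPart m) / (dimPart mi * dimPart mj) = 1 := by
  obtain ⟨a, haAdd, haC, hmiC⟩ := hmi
  obtain ⟨b, hbAdd, hbC, hmjC⟩ := hmj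
  obtain ⟨b', hb'Add, hb'C, hmC⟩ := hm
  have hgap : 1 < |content a - content b'| := by rw [haC, hb'C]; exact hij
  have hb'l : Addable l b' := addable_of_addable_insert l mi a b' haAdd hmiC hb'Add hgap
  have hbb : b = b' := addable_unique l b b' hbAdd hb'l (by rw [hb'C, hbC])
  have hmjC' : mj.cells = insert b' l.cells := by rw [hmjC, hbb]
  have hmC' : m.cells = insert b' (insert a l.cells) := by rw [hmC, hmiC]
  have hije : i ≠ j := by intro h; rw [h] at hij; simp at hij
  have hane : a ≠ b' := fun h => hije (by rw [← haC, ← hb'C, h])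
  have hnab := addable_not_le l a b' haAdd hb'l hane
  have hnba := addable_not_le l b' a hb'l haAdd (Ne.symm hane)
  rw [Prod.le_def, not_and_or, not_le, not_le] at hnab hnba
  have hcase : (a.1 < b'.1 ∧ b'.2 < a.2) ∨ (b'.1 < a.1 ∧ a.2 < b'.2) := by omega
  rcases hcase with ⟨h1, h2⟩ | ⟨h1, h2⟩
  · have := main_calc l mi mj m a b' haAdd hb'l h1 h2 hmiC hmjC' hmC'
    rw [haC, hb'C] at this
    exact this
  · have := main_calc l mj mi m b' a hb'l haAdd h1 h2 hmjC' hmiC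
      (by rw [hmC']; exact Finset.insert_comm b' a l.cells)
    rw [haC, hb'C] at this
    rw [show ((i : ℚ) - (j : ℚ)) ^ 2 = ((j : ℚ) - (i : ℚ)) ^ 2 by ring,
      mul_comm (dimPart mi) (dimPart mj)]
    exact this
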